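/- Let κ = e^{−βU}(ν − c) and define W(t,x) = (−νx − ν + c)e^{−x} + κ e^{−x+βt} for (t,x) ∈ [0,U] × ℝ. Then: (i) ∂W/∂x(t,x) = (νx − c)e^{−x} − κ e^{−x+βt}, so that for every real a one has (c − νx)e^{−x}·a + a·∂W/∂x(t,x) = −κ a e^{−x+βt}; (ii) if ν ≤ c (so κ ≤ 0), then ∂W/∂t(t,x) + max_{a ∈ [0,β]} [ (c − νx)e^{−x}·a + a·∂W/∂x(t,x) ] = 0 for all (t,x) ∈ [0,U] × ℝ, with the maximum attained at a = β; (iii) the boundary condition W(U,x) = −ν x e^{−x} holds for all x. (HJB verification claim from the proof of the paper's Theorem 1, case ν ≤ c.) -/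

import Mathlib

open Real Set

/-- Candidate value function `W(t,x) = (−νx − ν + c)e^{−x} + κ e^{−x+βt}`
with `κ = e^{−βU}(ν − c)`. -/
noncomputable def Wcand (U β c ν t x : ℝ) : ℝ :=
  (-(ν * x) - ν + c) * Real.exp (-x)
    + Real.exp (-(β * U)) * (ν - c) * Real.exp (-x + β * t)

/-- Its claimed partial derivative in `x`:
`∂W/∂x(t,x) = (νx − c)e^{−x} − κ e^{−x+βt}`. -/
noncomputable def WcandX (U β c ν t x : ℝ) : ℝ :=
  (ν * x - c) * Real.exp (-x)
    - Real.exp (-(β * U)) * (ν - c) * Real.exp (-x + β * t)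

/-- HJB verification claim from the proof of the paper's Theorem 1, case ν ≤ c.
(i) `∂W/∂x` is as claimed and `L(t,x,a) + a ∂W/∂x = −κ a e^{−x+βt}`;
(ii) if ν ≤ c then `∂W/∂t + max_{a∈[0,β]} {L + a ∂W/∂x} = 0`, the max attained
at `a = β`;  (iii) boundary condition `W(U,x) = −νx e^{−x}`. -/
theorem hjb_verification_nu_le_c
    (U β c ν : ℝ) (hU : 0 < U) (hβ : 0 < β) (hc : 0 < c) (hν : 0 < ν) :
    (∀ t ∈ Icc (0:ℝ) U, ∀ x : ℝ,
        HasDerivAt (fun y => Wcand U β c ν t y) (WcandX U β c ν t x) x ∧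
        ∀ a : ℝ,
          (c - ν * x) * Real.exp (-x) * a + a * WcandX U β c ν t x
            = -(Real.exp (-(β * U)) * (ν - c)) * a * Real.exp (-x + β * t)) ∧
    (ν ≤ c →
      ∀ t ∈ Icc (0:ℝ) U, ∀ x : ℝ,
        -- `∂W/∂t(t,x) = κ β e^{−x+βt}`
        HasDerivAt (fun s => Wcand U β c ν s x)
          (Real.exp (-(β * U)) * (ν - c) * β * Real.exp (-x + β * t)) t ∧
        -- the HJB equation holds with maximizing action `a = β`
        Real.exp (-(β * U)) * (ν - c) * β * Real.exp (-x + β * t)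
            + ((c - ν * x) * Real.exp (-x) * β + β * WcandX U β c ν t x) = 0 ∧
        -- the maximum over `a ∈ [0,β]` is attained at `a = β`
        ∀ a ∈ Icc (0:ℝ) β,
          (c - ν * x) * Real.exp (-x) * a + a * WcandX U β c ν t x
            ≤ (c - ν * x) * Real.exp (-x) * β + β * WcandX U β c ν t x) ∧
    (∀ x : ℝ, Wcand U β c ν U x = -(ν * x) * Real.exp (-x)) := by

  constructor
  · intro t ht x
    constructor
    · have h1 : HasDerivAt (fun y : ℝ => (-(ν * y) - ν + c) * Real.exp (-y))
          ((-ν) * Real.exp (-x) + (-(ν * x) - ν + c) * (-Real.exp (-x))) x := by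
        have hp : HasDerivAt (fun y : ℝ => -(ν * y) - ν + c) (-ν) x := by
          have := ((hasDerivAt_id x).const_mul ν).neg
          simpa using (this.sub_const ν).add_const c
        have he : HasDerivAt (fun y : ℝ => Real.exp (-y)) (-Real.exp (-x)) x := by
          simpa using ((hasDerivAt_id x).neg.exp)
        exact hp.mul he
      have h2 : HasDerivAt (fun y : ℝ => Real.exp (-(β * U)) * (ν - c) * Real.exp (-y + β * t))
          (Real.exp (-(β * U)) * (ν - c) * (-Real.exp (-x + β * t))) x := by
        have he : HasDerivAt (fun y : ℝ => Real.exp (-y + β * t)) (-Real.exp (-x + β * t)) x := by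
          have : HasDerivAt (fun y : ℝ => -y + β * t) (-1) x := by
            simpa using (hasDerivAt_id x).neg.add_const (β * t)
          simpa using this.exp
        simpa [mul_comm, mul_assoc] using he.const_mul (Real.exp (-(β * U)) * (ν - c))
      have := h1.add h2
      refine this.congr_deriv ?_
      simp only [WcandX]
      ring
    · intro a
      simp only [WcandX]
      ring
  constructor
  · intro hνc t ht x
    have hκ : Real.exp (-(β * U)) * (ν - c) ≤ 0 :=
      mul_nonpos_of_nonneg_of_nonpos (Real.exp_pos _).le (by linarith)
    refine ⟨?_, ?_, ?_⟩
    · have h1 : HasDerivAt (fun s : ℝ => Real.exp (-x + β * s)) (β * Real.exp (-x + β * t)) t := by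
        have : HasDerivAt (fun s : ℝ => -x + β * s) β t := by
          simpa using ((hasDerivAt_id t).const_mul β).const_add (-x)
        simpa [mul_comm] using this.exp
      have h2 := (h1.const_mul (Real.exp (-(β * U)) * (ν - c))).const_add
        ((-(ν * x) - ν + c) * Real.exp (-x))
      have heq : (fun s => Wcand U β c ν s x)
          = fun s => (-(ν * x) - ν + c) * Real.exp (-x)
            + Real.exp (-(β * U)) * (ν - c) * Real.exp (-x + β * s) := by
        funext s; simp [Wcand]
      rw [heq]
      refine h2.congr_deriv ?_
      ring
    · simp only [WcandX]; ring
    · intro a ha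
      have key : ∀ b : ℝ, (c - ν * x) * Real.exp (-x) * b + b * WcandX U β c ν t x
          = -(Real.exp (-(β * U)) * (ν - c)) * b * Real.exp (-x + β * t) := by
        intro b; simp only [WcandX]; ring
      rw [key a, key β]
      have : (0:ℝ) ≤ -(Real.exp (-(β * U)) * (ν - c)) := by linarith
      have := mul_le_mul_of_nonneg_right
        (mul_le_mul_of_nonneg_left ha.2 this) (Real.exp_pos (-x + β * t)).le
      linarith
  · intro x
    simp only [Wcand]
    rw [show -x + β * U = β * U + -x from by ring, Real.exp_add]
    have h : Real.exp (-(β * U)) * Real.exp (β * U) = 1 := by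
      rw [← Real.exp_add]; simp
    linear_combination (ν - c) * Real.exp (-x) * h
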